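/- Let λ > 0 and B(x) = sinh(λx)/λ on [0,1], B(x) = sinh(λ(2−x))/λ on (1,2], B = 0 elsewhere. Then the infimum over x ∈ [0,1) of B(x)² + B(x+1)² equals 2 sinh²(λ/2)/λ², attained at x = 1/2. -/

import Mathlib

lemma sinh_sq_key (a b : ℝ) :
    2 * Real.sinh ((a + b) / 2) ^ 2 ≤ Real.sinh a ^ 2 + Real.sinh b ^ 2 := by
  set p := (a + b) / 2 with hp
  set q := (a - b) / 2 with hq
  have ha : a = p + q := by rw [hp, hq]; ring
  have hb : b = p - q := by rw [hp, hq]; ring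
  have h1 : Real.sinh a = Real.sinh p * Real.cosh q + Real.cosh p * Real.sinh q := by
    rw [ha, Real.sinh_add]
  have h2 : Real.sinh b = Real.sinh p * Real.cosh q - Real.cosh p * Real.sinh q := by
    rw [hb, Real.sinh_sub]
  have hcp : Real.cosh p ^ 2 = Real.sinh p ^ 2 + 1 := by
    have := Real.cosh_sq_sub_sinh_sq p; nlinarith
  have hcq : Real.cosh q ^ 2 = Real.sinh q ^ 2 + 1 := by
    have := Real.cosh_sq_sub_sinh_sq q; nlinarith
  have hsum : Real.sinh a ^ 2 + Real.sinh b ^ 2 =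
      2 * (Real.sinh p ^ 2 * Real.cosh q ^ 2 + Real.cosh p ^ 2 * Real.sinh q ^ 2) := by
    rw [h1, h2]; ring
  rw [hsum, hcp, hcq]
  nlinarith [sq_nonneg (Real.sinh q), sq_nonneg (Real.sinh p * Real.sinh q)]

theorem EB2_inf_shifted_squares (lam : ℝ) (hlam : 0 < lam) (B : ℝ → ℝ)
    (hB : ∀ x : ℝ, B x =
      if x ∈ Set.Icc (0:ℝ) 1 then Real.sinh (lam * x) / lam
      else if x ∈ Set.Ioc (1:ℝ) 2 then Real.sinh (lam * (2 - x)) / lam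
      else 0) :
    IsLeast ((fun x : ℝ => B x ^ 2 + B (x + 1) ^ 2) '' Set.Ico (0:ℝ) 1)
        (2 * Real.sinh (lam / 2) ^ 2 / lam ^ 2) ∧
      B (1/2) ^ 2 + B (1/2 + 1) ^ 2 = 2 * Real.sinh (lam / 2) ^ 2 / lam ^ 2 := by
  have hlam' : lam ≠ 0 := ne_of_gt hlam
  -- value at 1/2
  have hBhalf : B (1/2) = Real.sinh (lam / 2) / lam := by
    rw [hB]
    have : (1/2 : ℝ) ∈ Set.Icc (0:ℝ) 1 := by constructor <;> norm_num
    rw [if_pos this, show lam * (1/2) = lam/2 from by ring]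
  have hB32 : B (1/2 + 1) = Real.sinh (lam / 2) / lam := by
    rw [hB]
    have h1 : (1/2 + 1 : ℝ) ∉ Set.Icc (0:ℝ) 1 := by
      norm_num [Set.mem_Icc]
    have h2 : (1/2 + 1 : ℝ) ∈ Set.Ioc (1:ℝ) 2 := by constructor <;> norm_num
    rw [if_neg h1, if_pos h2, show lam * (2 - (1/2+1)) = lam/2 from by ring]
  have hval : B (1/2) ^ 2 + B (1/2 + 1) ^ 2 = 2 * Real.sinh (lam / 2) ^ 2 / lam ^ 2 := by
    rw [hBhalf, hB32]; field_simp; ring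
  refine ⟨⟨⟨1/2, by constructor <;> norm_num, hval⟩, ?_⟩, hval⟩
  rintro y ⟨x, ⟨hx0, hx1⟩, rfl⟩
  have hBx : B x = Real.sinh (lam * x) / lam := by
    rw [hB]
    have : x ∈ Set.Icc (0:ℝ) 1 := ⟨hx0, le_of_lt hx1⟩
    rw [if_pos this]
  have hBx1 : B (x + 1) = Real.sinh (lam * (1 - x)) / lam := by
    rw [hB]
    rcases eq_or_lt_of_le hx0 with h | h
    · have : (x + 1 : ℝ) ∈ Set.Icc (0:ℝ) 1 := by
        rw [← h]; constructor <;> norm_num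
      rw [if_pos this, ← h]; norm_num
    · have h1 : (x + 1 : ℝ) ∉ Set.Icc (0:ℝ) 1 := by
        simp only [Set.mem_Icc, not_and_or, not_le]
        right; linarith
      have h2 : (x + 1 : ℝ) ∈ Set.Ioc (1:ℝ) 2 := ⟨by linarith, by linarith⟩
      rw [if_neg h1, if_pos h2]
      ring_nf
  simp only
  rw [hBx, hBx1]
  have key := sinh_sq_key (lam * x) (lam * (1 - x))
  have heq : (lam * x + lam * (1 - x)) / 2 = lam / 2 := by ring
  rw [heq] at key
  rw [div_pow, div_pow, ← add_div, div_le_div_iff_of_pos_right (by positivity)]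
  nlinarith [sq_nonneg lam]
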